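/- Let A be a subset of the real line and suppose that {V_i}_i and {W_j}_j are at most countable left-right ordered partitions of A. Then {V_i ∩ W_j}_{i,j} is an at most countable left-right ordered partition of A, and Σ_{i,j} diam(V_i ∩ W_j) ≤ min{ Σ_i diam(V_i), Σ_j diam(W_j) }. -/

import Mathlib

open MeasureTheory

lemma real_diam_eq_iSup (S : Set ℝ) :
    EMetric.diam S = ⨆ p : S × S, edist (p.1 : ℝ) (p.2 : ℝ) := by
  apply le_antisymm
  · exact EMetric.diam_le fun x hx y hy => le_iSup_of_le (⟨⟨x, hx⟩, ⟨y, hy⟩⟩ : S × S) le_rfl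
  · exact iSup_le fun p => EMetric.edist_le_diam_of_mem p.1.2 p.2.2

lemma diam_add_diam_le (S T : Set ℝ) (h : ∀ x ∈ S, ∀ y ∈ T, x ≤ y) :
    EMetric.diam S + EMetric.diam T ≤ EMetric.diam (S ∪ T) := by
  rcases S.eq_empty_or_nonempty with rfl | hS
  · rw [show EMetric.diam (∅ : Set ℝ) = 0 from EMetric.diam_empty, zero_add, Set.empty_union]
  rcases T.eq_empty_or_nonempty with rfl | hT
  · rw [show EMetric.diam (∅ : Set ℝ) = 0 from EMetric.diam_empty, add_zero, Set.union_empty]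
  haveI : Nonempty S := hS.to_subtype
  haveI : Nonempty T := hT.to_subtype
  rw [real_diam_eq_iSup S, real_diam_eq_iSup T]
  apply ENNReal.iSup_add_iSup_le
  rintro ⟨⟨s, hs⟩, ⟨s', hs'⟩⟩ ⟨⟨t, ht⟩, ⟨t', ht'⟩⟩
  simp only
  have h1 : s ≤ t := h s hs t ht
  have h2 : s ≤ t' := h s hs t' ht'
  have h3 : s' ≤ t := h s' hs' t ht
  have h4 : s' ≤ t' := h s' hs' t' ht'
  have hmin : min s s' ∈ S ∪ T := by
    rcases le_total s s' with hc | hc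
    · rw [min_eq_left hc]; exact Or.inl hs
    · rw [min_eq_right hc]; exact Or.inl hs'
  have hmax : max t t' ∈ S ∪ T := by
    rcases le_total t t' with hc | hc
    · rw [max_eq_right hc]; exact Or.inr ht'
    · rw [max_eq_left hc]; exact Or.inr ht
  calc edist s s' + edist t t'
      = ENNReal.ofReal (|s - s'| + |t - t'|) := by
        rw [edist_dist, edist_dist, Real.dist_eq, Real.dist_eq,
          ENNReal.ofReal_add (abs_nonneg _) (abs_nonneg _)]
    _ ≤ edist (min s s') (max t t') := by
        rw [edist_dist, Real.dist_eq]
        apply ENNReal.ofReal_le_ofReal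
        have e1 : |s - s'| = s ⊔ s' - s ⊓ s' := by rw [abs_sub_comm]; exact (max_sub_min_eq_abs s s').symm
        have e2 : |t - t'| = t ⊔ t' - t ⊓ t' := by rw [abs_sub_comm]; exact (max_sub_min_eq_abs t t').symm
        have hlo : s ⊓ s' ≤ t ⊔ t' := le_trans inf_le_left (le_trans h1 le_sup_left)
        have e3 : |s ⊓ s' - t ⊔ t'| = t ⊔ t' - s ⊓ s' := by
          rw [abs_sub_comm]; exact abs_of_nonneg (by linarith)
        have hsup : s ⊔ s' ≤ t ⊓ t' := sup_le (le_inf h1 h2) (le_inf h3 h4)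
        have h5 : s ⊓ s' ≤ s ⊔ s' := le_trans inf_le_left le_sup_left
        have h6 : t ⊓ t' ≤ t ⊔ t' := le_trans inf_le_left le_sup_left
        rw [e1, e2, e3]
        linarith
    _ ≤ EMetric.diam (S ∪ T) := EMetric.edist_le_diam_of_mem hmin hmax

lemma finset_diam_sum_le (S : ℕ → Set ℝ) (F : Finset ℕ)
    (hd : ∀ j ∈ F, ∀ k ∈ F, j ≠ k → Disjoint (S j) (S k))
    (ho : ∀ j ∈ F, ∀ k ∈ F, j ≠ k →
      (∀ x ∈ S j, ∀ y ∈ S k, x ≤ y) ∨ (∀ x ∈ S j, ∀ y ∈ S k, y ≤ x)) :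
    ∑ j ∈ F, EMetric.diam (S j) ≤ EMetric.diam (⋃ j ∈ F, S j) := by
  classical
  induction F using Finset.strongInduction with
  | _ F ih =>
    by_cases hne : ∃ j ∈ F, (S j).Nonempty
    · set f : ℕ → ℝ := fun j => if h : (S j).Nonempty then h.choose else 0 with hf
      have hfmem : ∀ j, (S j).Nonempty → f j ∈ S j := by
        intro j hj
        simp only [hf, dif_pos hj]
        exact hj.choose_spec
      obtain ⟨j₀, hj₀F, hj₀⟩ := hne
      set G : Finset ℕ := F.filter (fun j => (S j).Nonempty) with hG
      have hGne : G.Nonempty := ⟨j₀, Finset.mem_filter.2 ⟨hj₀F, hj₀⟩⟩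
      obtain ⟨m, hmG, hmax⟩ := G.exists_max_image f hGne
      have hmF : m ∈ F := (Finset.mem_filter.1 hmG).1
      have hmne : (S m).Nonempty := (Finset.mem_filter.1 hmG).2
      -- every other set lies to the left of S m
      have hleft : ∀ j ∈ F, j ≠ m → ∀ x ∈ S j, ∀ y ∈ S m, x ≤ y := by
        intro j hjF hjm x hx y hy
        rcases ho j hjF m hmF hjm with hc | hc
        · exact hc x hx y hy
        · exfalso
          have hjne : (S j).Nonempty := ⟨x, hx⟩
          have hjG : j ∈ G := Finset.mem_filter.2 ⟨hjF, hjne⟩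
          have h1 : f m ≤ f j := hc (f j) (hfmem j hjne) (f m) (hfmem m hmne)
          have h2 : f j ≤ f m := hmax j hjG
          have heq : f j = f m := le_antisymm h2 h1
          have := hd j hjF m hmF hjm
          exact (Set.disjoint_left.1 this) (hfmem j hjne)
            (heq ▸ hfmem m hmne)
      have hsplit : (⋃ j ∈ F, S j) = (⋃ j ∈ F.erase m, S j) ∪ S m := by
        conv_lhs => rw [← Finset.insert_erase hmF]
        rw [Finset.set_biUnion_insert]
        exact Set.union_comm _ _
      calc ∑ j ∈ F, EMetric.diam (S j)
          = ∑ j ∈ F.erase m, EMetric.diam (S j) + EMetric.diam (S m) :=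
            (Finset.sum_erase_add F _ hmF).symm
        _ ≤ EMetric.diam (⋃ j ∈ F.erase m, S j) + EMetric.diam (S m) := by
            gcongr
            exact ih (F.erase m) (Finset.erase_ssubset hmF)
              (fun j hj k hk => hd j (Finset.mem_of_mem_erase hj) k (Finset.mem_of_mem_erase hk))
              (fun j hj k hk => ho j (Finset.mem_of_mem_erase hj) k (Finset.mem_of_mem_erase hk))
        _ ≤ EMetric.diam ((⋃ j ∈ F.erase m, S j) ∪ S m) := by
            apply diam_add_diam_le
            rintro x hx y hy
            simp only [Set.mem_iUnion] at hx
            obtain ⟨j, hjF, hxj⟩ := hx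
            exact hleft j (Finset.mem_of_mem_erase hjF) (Finset.ne_of_mem_erase hjF) x hxj y hy
        _ = EMetric.diam (⋃ j ∈ F, S j) := by rw [hsplit]
    · push_neg at hne
      have : ∀ j ∈ F, EMetric.diam (S j) = 0 := by
        intro j hj
        rw [hne j hj]
        exact EMetric.diam_empty
      rw [Finset.sum_congr rfl this]
      simp

lemma tsum_diam_le (S : ℕ → Set ℝ) (T : Set ℝ) (hsub : ∀ j, S j ⊆ T)
    (hd : ∀ j k, j ≠ k → Disjoint (S j) (S k))
    (ho : ∀ j k, j ≠ k →
      (∀ x ∈ S j, ∀ y ∈ S k, x ≤ y) ∨ (∀ x ∈ S j, ∀ y ∈ S k, y ≤ x)) :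
    ∑' j, EMetric.diam (S j) ≤ EMetric.diam T := by
  rw [ENNReal.tsum_eq_iSup_sum]
  apply iSup_le
  intro F
  refine le_trans (finset_diam_sum_le S F (fun j _ k _ h => hd j k h)
    (fun j _ k _ h => ho j k h)) ?_
  apply EMetric.diam_mono
  exact Set.iUnion₂_subset fun j _ => hsub j

/-- An (at most countable) indexed family `V` is a left-right ordered partition of `A ⊆ ℝ`
if its members are pairwise disjoint, their union is `A`, and any two distinct members are
comparable: one lies entirely to the left of the other. -/
def LROrderedPartition {ι : Type*} (V : ι → Set ℝ) (A : Set ℝ) : Prop :=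
  (⋃ i, V i) = A ∧
  Pairwise (Function.onFun Disjoint V) ∧
  ∀ i j, i ≠ j →
    (∀ x ∈ V i, ∀ y ∈ V j, x ≤ y) ∨ (∀ x ∈ V i, ∀ y ∈ V j, y ≤ x)

/-- If `{Vᵢ}` and `{Wⱼ}` are at most countable left-right ordered partitions of `A ⊆ ℝ`,
then `{Vᵢ ∩ Wⱼ}` is one as well, and
`Σ_{i,j} diam (Vᵢ ∩ Wⱼ) ≤ min (Σᵢ diam Vᵢ) (Σⱼ diam Wⱼ)`. -/
theorem stmt_5 (A : Set ℝ) (V W : ℕ → Set ℝ)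
    (hV : LROrderedPartition V A) (hW : LROrderedPartition W A) :
    LROrderedPartition (fun p : ℕ × ℕ => V p.1 ∩ W p.2) A ∧
    ∑' p : ℕ × ℕ, EMetric.diam (V p.1 ∩ W p.2) ≤
      min (∑' i, EMetric.diam (V i)) (∑' j, EMetric.diam (W j)) := by
  obtain ⟨hVu, hVd, hVo⟩ := hV
  obtain ⟨hWu, hWd, hWo⟩ := hW
  constructor
  · refine ⟨?_, ?_, ?_⟩
    · ext x
      simp only [Set.mem_iUnion, Prod.exists, Set.mem_inter_iff]
      constructor
      · rintro ⟨i, j, hxi, _⟩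
        rw [← hVu]; exact Set.mem_iUnion.2 ⟨i, hxi⟩
      · intro hx
        obtain ⟨i, hi⟩ := Set.mem_iUnion.1 (hVu ▸ hx : x ∈ ⋃ i, V i)
        obtain ⟨j, hj⟩ := Set.mem_iUnion.1 (hWu ▸ hx : x ∈ ⋃ j, W j)
        exact ⟨i, j, hi, hj⟩
    · intro p q hpq
      rcases eq_or_ne p.1 q.1 with h1 | h1
      · have h2 : p.2 ≠ q.2 := fun h2 => hpq (Prod.ext h1 h2)
        exact Disjoint.mono Set.inter_subset_right Set.inter_subset_right (hWd h2)
      · exact Disjoint.mono Set.inter_subset_left Set.inter_subset_left (hVd h1)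
    · intro p q hpq
      rcases eq_or_ne p.1 q.1 with h1 | h1
      · have h2 : p.2 ≠ q.2 := fun h2 => hpq (Prod.ext h1 h2)
        rcases hWo p.2 q.2 h2 with hc | hc
        · exact Or.inl fun x hx y hy => hc x hx.2 y hy.2
        · exact Or.inr fun x hx y hy => hc x hx.2 y hy.2
      · rcases hVo p.1 q.1 h1 with hc | hc
        · exact Or.inl fun x hx y hy => hc x hx.1 y hy.1
        · exact Or.inr fun x hx y hy => hc x hx.1 y hy.1
  · apply le_min
    · refine le_trans (le_of_eq (ENNReal.tsum_prod (f := fun i j => EMetric.diam (V i ∩ W j)))) ?_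
      apply ENNReal.tsum_le_tsum
      intro i
      exact tsum_diam_le (fun j => V i ∩ W j) (V i) (fun j => Set.inter_subset_left)
        (fun j k h => Disjoint.mono Set.inter_subset_right Set.inter_subset_right (hWd h))
        (fun j k h => by
          rcases hWo j k h with hc | hc
          · exact Or.inl fun x hx y hy => hc x hx.2 y hy.2
          · exact Or.inr fun x hx y hy => hc x hx.2 y hy.2)
    · refine le_trans (le_of_eq (ENNReal.tsum_prod (f := fun i j => EMetric.diam (V i ∩ W j)))) ?_
      rw [ENNReal.tsum_comm]
      apply ENNReal.tsum_le_tsum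
      intro j
      exact tsum_diam_le (fun i => V i ∩ W j) (W j) (fun i => Set.inter_subset_right)
        (fun i k h => Disjoint.mono Set.inter_subset_left Set.inter_subset_left (hVd h))
        (fun i k h => by
          rcases hVo i k h with hc | hc
          · exact Or.inl fun x hx y hy => hc x hx.1 y hy.1
          · exact Or.inr fun x hx y hy => hc x hx.1 y hy.1)
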